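/- Let t, B and a_1, …, a_n be positive integers with n ≥ 2, Σ_{1≤i≤n} a_i = tB and a_i > tn for all i, and set k = (t−1)n + 3B + 1. Let G be the graph constructed as follows: start with the complete bipartite graph between U = {u_1, …, u_n} and V = {v_1, …, v_t}; attach a_i − 1 pendant vertices to each u_i and 2B pendant vertices to each v_j; add a new vertex w together with 3B pendant neighbors of w; and add the edge {w, u_n}. Then there exists F ⊆ E(G) with |F| + max_{C ∈ cc(G−F)} |E(C)| ≤ k if and only if there exists a partition (I_1, …, I_t) of {1, …, n} such that Σ_{i∈I_j} a_i = B for every j ∈ {1, …, t}. -/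

import Mathlib

namespace VI

open SimpleGraph

variable {V : Type*}

/-- Total weight of a set of vertices. -/
noncomputable def setWeight (w : V → ℕ) (X : Set V) : ℕ := ∑ᶠ v ∈ X, w v

/-- Maximum weight of a connected component of `G − S`. -/
noncomputable def compMax (G : SimpleGraph V) (w : V → ℕ) (S : Set V) : ℕ :=
  sSup {n | ∃ C : (G.induce Sᶜ).ConnectedComponent, n = setWeight w (Subtype.val '' C.supp)}

/-- `w(S) + max_{C ∈ cc(G−S)} w(V(C))`. -/
noncomputable def viCost (G : SimpleGraph V) (w : V → ℕ) (S : Set V) : ℕ :=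
  setWeight w S + compMax G w S

/-- The weighted vertex integrity of `G`. -/
noncomputable def wvi (G : SimpleGraph V) (w : V → ℕ) : ℕ := ⨅ S : Set V, viCost G w S

/-- Maximum number of vertices of a connected component of `G − S`. -/
noncomputable def uCompMax (G : SimpleGraph V) (S : Set V) : ℕ :=
  sSup {n | ∃ C : (G.induce Sᶜ).ConnectedComponent, n = C.supp.ncard}

/-- `|S| + max_{C ∈ cc(G−S)} |V(C)|`. -/
noncomputable def uViCost (G : SimpleGraph V) (S : Set V) : ℕ := S.ncard + uCompMax G S

/-- The (unweighted) vertex integrity of `G`. -/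
noncomputable def uvi (G : SimpleGraph V) : ℕ := ⨅ S : Set V, uViCost G S

/-- A vertex `v` is redundant w.r.t. `S` if at most one connected component of `G − S`
contains a neighbor of `v`. -/
def Redundant (G : SimpleGraph V) (S : Set V) (v : V) : Prop :=
  {C : (G.induce Sᶜ).ConnectedComponent | ∃ u : (Sᶜ : Set V), G.Adj v ↑u ∧ u ∈ C.supp}.Subsingleton

/-- `S` is irredundant if it contains no redundant vertex. -/
def Irredundant (G : SimpleGraph V) (S : Set V) : Prop := ∀ v ∈ S, ¬ Redundant G S v

end VI

namespace VI

/-- Vertices: `u_1, …, u_n`; `v_1, …, v_t`; the `a_i − 1` pendants of each `u_i`;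
the `2B` pendants of each `v_j`; the vertex `w`; and the `3B` pendants of `w`. -/
def LIVertex (n t B : ℕ) (a : Fin n → ℕ) : Type :=
  Fin n ⊕ Fin t ⊕ (Σ i : Fin n, Fin (a i - 1)) ⊕ (Fin t × Fin (2 * B)) ⊕
    Unit ⊕ Fin (3 * B)

/-- Edges: the complete bipartite graph between the `u_i` and the `v_j`; the pendant edges;
the edges from `w` to its pendants; and the edge `{w, u_n}`. -/
def liRel (n t B : ℕ) (a : Fin n → ℕ) : LIVertex n t B a → LIVertex n t B a → Prop
  | .inl _, .inr (.inl _) => True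
  | .inl i, .inr (.inr (.inl s)) => i = s.1
  | .inr (.inl j), .inr (.inr (.inr (.inl (j', _)))) => j = j'
  | .inr (.inr (.inr (.inr (.inl _)))), .inr (.inr (.inr (.inr (.inr _)))) => True
  | .inl i, .inr (.inr (.inr (.inr (.inl _)))) => (i : ℕ) = n - 1
  | _, _ => False

/-- The graph of the reduction from Unary Bin Packing to Line Integrity. -/
def liGraph (n t B : ℕ) (a : Fin n → ℕ) : SimpleGraph (LIVertex n t B a) :=
  SimpleGraph.fromRel (liRel n t B a)

end VI

namespace VI
open SimpleGraph
set_option linter.unusedSectionVars false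
set_option maxHeartbeats 1000000

section Components
variable {W : Type*} [Fintype W] {H : SimpleGraph W}
set_option linter.unusedSectionVars false

lemma mem_supp_of_adj {C : H.ConnectedComponent} {x y : W}
    (hx : x ∈ C.supp) (h : H.Adj x y) : y ∈ C.supp := by
  rw [ConnectedComponent.mem_supp_iff] at *
  rw [← hx]; exact ConnectedComponent.sound h.symm.reachable

lemma edge_mem_edgesOf {C : H.ConnectedComponent} {x y : W}
    (h : H.Adj x y) (hx : x ∈ C.supp) :
    s(x, y) ∈ {e ∈ H.edgeSet | ∀ v ∈ e, v ∈ C.supp} := by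
  refine ⟨h, ?_⟩
  intro v hv
  rcases Sym2.mem_iff.1 hv with rfl | rfl
  · exact hx
  · exact mem_supp_of_adj hx h

lemma card_le_M {C : H.ConnectedComponent} {T : Finset (Sym2 W)}
    (hT : (T : Set (Sym2 W)) ⊆ {e ∈ H.edgeSet | ∀ v ∈ e, v ∈ C.supp}) :
    T.card ≤ sSup {m | ∃ C : H.ConnectedComponent,
      m = {e ∈ H.edgeSet | ∀ v ∈ e, v ∈ C.supp}.ncard} := by
  have h1 : T.card ≤ {e ∈ H.edgeSet | ∀ v ∈ e, v ∈ C.supp}.ncard := by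
    rw [← Set.ncard_coe_finset]
    exact Set.ncard_le_ncard hT (Set.toFinite _)
  refine h1.trans (le_csSup ⟨Fintype.card (Sym2 W), ?_⟩ ⟨C, rfl⟩)
  rintro m ⟨C', rfl⟩
  calc {e ∈ H.edgeSet | ∀ v ∈ e, v ∈ C'.supp}.ncard
      ≤ (Set.univ : Set (Sym2 W)).ncard := Set.ncard_le_ncard (Set.subset_univ _) Set.finite_univ
    _ = Fintype.card (Sym2 W) := by rw [Set.ncard_univ, Nat.card_eq_fintype_card]

lemma M_le [Nonempty W] {m : ℕ}
    (h : ∀ C : H.ConnectedComponent, {e ∈ H.edgeSet | ∀ v ∈ e, v ∈ C.supp}.ncard ≤ m) :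
    sSup {m | ∃ C : H.ConnectedComponent,
      m = {e ∈ H.edgeSet | ∀ v ∈ e, v ∈ C.supp}.ncard} ≤ m := by
  refine csSup_le ⟨_, ⟨H.connectedComponentMk (Classical.arbitrary W), rfl⟩⟩ ?_
  rintro b ⟨C, rfl⟩; exact h C

lemma pi_reach {R : Type*} {π : W → R} (hπ : ∀ {x y}, H.Adj x y → π x = π y)
    {x y : W} (h : H.Reachable x y) : π x = π y := by
  obtain ⟨p⟩ := h
  induction p with
  | nil => rfl
  | cons h p ih => exact (hπ h).trans ih

lemma pi_const_on_supp {R : Type*} {π : W → R} (hπ : ∀ {x y}, H.Adj x y → π x = π y)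
    {C : H.ConnectedComponent} {x y : W} (hx : x ∈ C.supp) (hy : y ∈ C.supp) :
    π x = π y := by
  rw [ConnectedComponent.mem_supp_iff] at hx hy
  exact pi_reach hπ (ConnectedComponent.exact (hx.trans hy.symm))

end Components

variable {n t B : ℕ} {a : Fin n → ℕ}

instance : Fintype (LIVertex n t B a) := by unfold LIVertex; infer_instance
noncomputable instance : DecidableEq (LIVertex n t B a) := Classical.decEq _
instance : Nonempty (LIVertex n t B a) := ⟨Sum.inr (Sum.inr (Sum.inr (Sum.inr (Sum.inl ()))))⟩

def vu (i : Fin n) : LIVertex n t B a := Sum.inl i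
def vv (j : Fin t) : LIVertex n t B a := Sum.inr (Sum.inl j)
def vpu (s : Σ i : Fin n, Fin (a i - 1)) : LIVertex n t B a := Sum.inr (Sum.inr (Sum.inl s))
def vpv (x : Fin t × Fin (2 * B)) : LIVertex n t B a := Sum.inr (Sum.inr (Sum.inr (Sum.inl x)))
def vw : LIVertex n t B a := Sum.inr (Sum.inr (Sum.inr (Sum.inr (Sum.inl ()))))
def vpw (p : Fin (3 * B)) : LIVertex n t B a := Sum.inr (Sum.inr (Sum.inr (Sum.inr (Sum.inr p))))

open SimpleGraph in
lemma liAdj_cases {x y : LIVertex n t B a} (h : (liGraph n t B a).Adj x y) :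
    (∃ i j, s(x, y) = s(vu i, vv j)) ∨
    (∃ p : Σ i : Fin n, Fin (a i - 1), s(x, y) = s(vu p.1, vpu p)) ∨
    (∃ j p, s(x, y) = s(vv j, vpv (j, p))) ∨
    (∃ p, s(x, y) = s(vw (n := n) (t := t) (B := B) (a := a), vpw p)) ∨
    (∃ i : Fin n, (i : ℕ) = n - 1 ∧ s(x, y) = s(vu i, vw)) := by
  rw [liGraph, SimpleGraph.fromRel_adj] at h
  obtain ⟨-, h | h⟩ := h <;>
    rcases x with i | j | ⟨i1, p1⟩ | ⟨j1, q1⟩ | u | p <;>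
      rcases y with i' | j' | ⟨i1', p1'⟩ | ⟨j1', q1'⟩ | u' | p' <;>
        simp only [liRel] at h <;>
    [ exact Or.inl ⟨i, j', rfl⟩;
      (cases h; exact Or.inr (Or.inl ⟨⟨i, p1'⟩, rfl⟩));
      exact Or.inr (Or.inr (Or.inr (Or.inr ⟨i, h, rfl⟩)));
      (cases h; exact Or.inr (Or.inr (Or.inl ⟨j, q1', rfl⟩)));
      exact Or.inr (Or.inr (Or.inr (Or.inl ⟨p', rfl⟩)));
      exact Or.inl ⟨i', j, Sym2.eq_swap⟩;
      (cases h; exact Or.inr (Or.inl ⟨⟨i1, p1⟩, Sym2.eq_swap⟩));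
      (cases h; exact Or.inr (Or.inr (Or.inl ⟨j1, q1, Sym2.eq_swap⟩)));
      exact Or.inr (Or.inr (Or.inr (Or.inr ⟨i', h, Sym2.eq_swap⟩)));
      exact Or.inr (Or.inr (Or.inr (Or.inl ⟨p, Sym2.eq_swap⟩)))]


noncomputable def PuF (n t B : ℕ) (a : Fin n → ℕ) (i : Fin n) : Finset (Sym2 (LIVertex n t B a)) :=
  Finset.univ.image fun p : Fin (a i - 1) => s(vu i, vpu ⟨i, p⟩)
noncomputable def PvF (n t B : ℕ) (a : Fin n → ℕ) (j : Fin t) : Finset (Sym2 (LIVertex n t B a)) :=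
  Finset.univ.image fun p : Fin (2 * B) => s(vv j, vpv (j, p))
noncomputable def PwF (n t B : ℕ) (a : Fin n → ℕ) : Finset (Sym2 (LIVertex n t B a)) :=
  Finset.univ.image fun p : Fin (3 * B) => s(vw, vpw p)
noncomputable def UVF (n t B : ℕ) (a : Fin n → ℕ) (i : Fin n) : Finset (Sym2 (LIVertex n t B a)) :=
  Finset.univ.image fun j : Fin t => s(vu i, vv j)
def ewn (n t B : ℕ) (a : Fin n → ℕ) (hn : 0 < n) : Sym2 (LIVertex n t B a) :=
  s(vw, vu ⟨n - 1, Nat.sub_lt hn one_pos⟩)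


section InjLemmas
variable {n t B : ℕ} {a : Fin n → ℕ}

@[simp] lemma vu_inj {i i2 : Fin n} :
    (vu (n := n) (t := t) (B := B) (a := a) i = vu i2) ↔ i = i2 := by
  refine ⟨fun h => ?_, fun h => by rw [h]⟩
  simp only [vu] at h
  repeat injection h with h
  try exact h

@[simp] lemma vv_inj {j j2 : Fin t} :
    (vv (n := n) (t := t) (B := B) (a := a) j = vv j2) ↔ j = j2 := by
  refine ⟨fun h => ?_, fun h => by rw [h]⟩
  simp only [vv] at h
  repeat injection h with h
  try exact h

@[simp] lemma vpu_inj {s s2 : Σ i : Fin n, Fin (a i - 1)} :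
    (vpu (n := n) (t := t) (B := B) (a := a) s = vpu s2) ↔ s = s2 := by
  refine ⟨fun h => ?_, fun h => by rw [h]⟩
  simp only [vpu] at h
  repeat injection h with h
  try exact h

@[simp] lemma vpv_inj {x x2 : Fin t × Fin (2 * B)} :
    (vpv (n := n) (t := t) (B := B) (a := a) x = vpv x2) ↔ x = x2 := by
  refine ⟨fun h => ?_, fun h => by rw [h]⟩
  simp only [vpv] at h
  repeat injection h with h
  try exact h

@[simp] lemma vpw_inj {p p2 : Fin (3 * B)} :
    (vpw (n := n) (t := t) (B := B) (a := a) p = vpw p2) ↔ p = p2 := by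
  refine ⟨fun h => ?_, fun h => by rw [h]⟩
  simp only [vpw] at h
  repeat injection h with h
  try exact h

@[simp] lemma vu_ne_vv {i : Fin n} {j2 : Fin t} :
    vu (n := n) (t := t) (B := B) (a := a) i ≠ vv j2 := by
  intro h
  simp only [vu, vv] at h
  repeat first | (injection h with h) | injection h

@[simp] lemma vu_ne_vpu {i : Fin n} {s2 : Σ i : Fin n, Fin (a i - 1)} :
    vu (n := n) (t := t) (B := B) (a := a) i ≠ vpu s2 := by
  intro h
  simp only [vu, vpu] at h
  repeat first | (injection h with h) | injection h

@[simp] lemma vu_ne_vpv {i : Fin n} {x2 : Fin t × Fin (2 * B)} :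
    vu (n := n) (t := t) (B := B) (a := a) i ≠ vpv x2 := by
  intro h
  simp only [vu, vpv] at h
  repeat first | (injection h with h) | injection h

@[simp] lemma vu_ne_vw {i : Fin n} :
    vu (n := n) (t := t) (B := B) (a := a) i ≠ vw := by
  intro h
  simp only [vu, vw] at h
  repeat first | (injection h with h) | injection h

@[simp] lemma vu_ne_vpw {i : Fin n} {p2 : Fin (3 * B)} :
    vu (n := n) (t := t) (B := B) (a := a) i ≠ vpw p2 := by
  intro h
  simp only [vu, vpw] at h
  repeat first | (injection h with h) | injection h

@[simp] lemma vv_ne_vu {j : Fin t} {i2 : Fin n} :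
    vv (n := n) (t := t) (B := B) (a := a) j ≠ vu i2 := by
  intro h
  simp only [vv, vu] at h
  repeat first | (injection h with h) | injection h

@[simp] lemma vv_ne_vpu {j : Fin t} {s2 : Σ i : Fin n, Fin (a i - 1)} :
    vv (n := n) (t := t) (B := B) (a := a) j ≠ vpu s2 := by
  intro h
  simp only [vv, vpu] at h
  repeat first | (injection h with h) | injection h

@[simp] lemma vv_ne_vpv {j : Fin t} {x2 : Fin t × Fin (2 * B)} :
    vv (n := n) (t := t) (B := B) (a := a) j ≠ vpv x2 := by
  intro h
  simp only [vv, vpv] at h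
  repeat first | (injection h with h) | injection h

@[simp] lemma vv_ne_vw {j : Fin t} :
    vv (n := n) (t := t) (B := B) (a := a) j ≠ vw := by
  intro h
  simp only [vv, vw] at h
  repeat first | (injection h with h) | injection h

@[simp] lemma vv_ne_vpw {j : Fin t} {p2 : Fin (3 * B)} :
    vv (n := n) (t := t) (B := B) (a := a) j ≠ vpw p2 := by
  intro h
  simp only [vv, vpw] at h
  repeat first | (injection h with h) | injection h

@[simp] lemma vpu_ne_vu {s : Σ i : Fin n, Fin (a i - 1)} {i2 : Fin n} :
    vpu (n := n) (t := t) (B := B) (a := a) s ≠ vu i2 := by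
  intro h
  simp only [vpu, vu] at h
  repeat first | (injection h with h) | injection h

@[simp] lemma vpu_ne_vv {s : Σ i : Fin n, Fin (a i - 1)} {j2 : Fin t} :
    vpu (n := n) (t := t) (B := B) (a := a) s ≠ vv j2 := by
  intro h
  simp only [vpu, vv] at h
  repeat first | (injection h with h) | injection h

@[simp] lemma vpu_ne_vpv {s : Σ i : Fin n, Fin (a i - 1)} {x2 : Fin t × Fin (2 * B)} :
    vpu (n := n) (t := t) (B := B) (a := a) s ≠ vpv x2 := by
  intro h
  simp only [vpu, vpv] at h
  repeat first | (injection h with h) | injection h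

@[simp] lemma vpu_ne_vw {s : Σ i : Fin n, Fin (a i - 1)} :
    vpu (n := n) (t := t) (B := B) (a := a) s ≠ vw := by
  intro h
  simp only [vpu, vw] at h
  repeat first | (injection h with h) | injection h

@[simp] lemma vpu_ne_vpw {s : Σ i : Fin n, Fin (a i - 1)} {p2 : Fin (3 * B)} :
    vpu (n := n) (t := t) (B := B) (a := a) s ≠ vpw p2 := by
  intro h
  simp only [vpu, vpw] at h
  repeat first | (injection h with h) | injection h

@[simp] lemma vpv_ne_vu {x : Fin t × Fin (2 * B)} {i2 : Fin n} :
    vpv (n := n) (t := t) (B := B) (a := a) x ≠ vu i2 := by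
  intro h
  simp only [vpv, vu] at h
  repeat first | (injection h with h) | injection h

@[simp] lemma vpv_ne_vv {x : Fin t × Fin (2 * B)} {j2 : Fin t} :
    vpv (n := n) (t := t) (B := B) (a := a) x ≠ vv j2 := by
  intro h
  simp only [vpv, vv] at h
  repeat first | (injection h with h) | injection h

@[simp] lemma vpv_ne_vpu {x : Fin t × Fin (2 * B)} {s2 : Σ i : Fin n, Fin (a i - 1)} :
    vpv (n := n) (t := t) (B := B) (a := a) x ≠ vpu s2 := by
  intro h
  simp only [vpv, vpu] at h
  repeat first | (injection h with h) | injection h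

@[simp] lemma vpv_ne_vw {x : Fin t × Fin (2 * B)} :
    vpv (n := n) (t := t) (B := B) (a := a) x ≠ vw := by
  intro h
  simp only [vpv, vw] at h
  repeat first | (injection h with h) | injection h

@[simp] lemma vpv_ne_vpw {x : Fin t × Fin (2 * B)} {p2 : Fin (3 * B)} :
    vpv (n := n) (t := t) (B := B) (a := a) x ≠ vpw p2 := by
  intro h
  simp only [vpv, vpw] at h
  repeat first | (injection h with h) | injection h

@[simp] lemma vw_ne_vu {i2 : Fin n} :
    vw (n := n) (t := t) (B := B) (a := a) ≠ vu i2 := by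
  intro h
  simp only [vw, vu] at h
  repeat first | (injection h with h) | injection h

@[simp] lemma vw_ne_vv {j2 : Fin t} :
    vw (n := n) (t := t) (B := B) (a := a) ≠ vv j2 := by
  intro h
  simp only [vw, vv] at h
  repeat first | (injection h with h) | injection h

@[simp] lemma vw_ne_vpu {s2 : Σ i : Fin n, Fin (a i - 1)} :
    vw (n := n) (t := t) (B := B) (a := a) ≠ vpu s2 := by
  intro h
  simp only [vw, vpu] at h
  repeat first | (injection h with h) | injection h

@[simp] lemma vw_ne_vpv {x2 : Fin t × Fin (2 * B)} :
    vw (n := n) (t := t) (B := B) (a := a) ≠ vpv x2 := by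
  intro h
  simp only [vw, vpv] at h
  repeat first | (injection h with h) | injection h

@[simp] lemma vw_ne_vpw {p2 : Fin (3 * B)} :
    vw (n := n) (t := t) (B := B) (a := a) ≠ vpw p2 := by
  intro h
  simp only [vw, vpw] at h
  repeat first | (injection h with h) | injection h

@[simp] lemma vpw_ne_vu {p : Fin (3 * B)} {i2 : Fin n} :
    vpw (n := n) (t := t) (B := B) (a := a) p ≠ vu i2 := by
  intro h
  simp only [vpw, vu] at h
  repeat first | (injection h with h) | injection h

@[simp] lemma vpw_ne_vv {p : Fin (3 * B)} {j2 : Fin t} :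
    vpw (n := n) (t := t) (B := B) (a := a) p ≠ vv j2 := by
  intro h
  simp only [vpw, vv] at h
  repeat first | (injection h with h) | injection h

@[simp] lemma vpw_ne_vpu {p : Fin (3 * B)} {s2 : Σ i : Fin n, Fin (a i - 1)} :
    vpw (n := n) (t := t) (B := B) (a := a) p ≠ vpu s2 := by
  intro h
  simp only [vpw, vpu] at h
  repeat first | (injection h with h) | injection h

@[simp] lemma vpw_ne_vpv {p : Fin (3 * B)} {x2 : Fin t × Fin (2 * B)} :
    vpw (n := n) (t := t) (B := B) (a := a) p ≠ vpv x2 := by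
  intro h
  simp only [vpw, vpv] at h
  repeat first | (injection h with h) | injection h

@[simp] lemma vpw_ne_vw {p : Fin (3 * B)} :
    vpw (n := n) (t := t) (B := B) (a := a) p ≠ vw := by
  intro h
  simp only [vpw, vw] at h
  repeat first | (injection h with h) | injection h

end InjLemmas
attribute [local simp] PuF PvF PwF UVF ewn Sym2.eq_iff

lemma card_PuF (i : Fin n) : (PuF n t B a i).card = a i - 1 := by
  rw [PuF, Finset.card_image_of_injective _ fun p q h => by simpa using h]
  simp
lemma card_PvF (j : Fin t) : (PvF n t B a j).card = 2 * B := by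
  rw [PvF, Finset.card_image_of_injective _ fun p q h => by simpa using h]
  simp
lemma card_PwF : (PwF n t B a).card = 3 * B := by
  rw [PwF, Finset.card_image_of_injective _ fun p q h => by simpa using h]
  simp
lemma card_UVF (i : Fin n) : (UVF n t B a i).card = t := by
  rw [UVF, Finset.card_image_of_injective _ fun p q h => by simpa using h]
  simp

lemma disj_Pu_Pu {i i' : Fin n} (h : i ≠ i') : Disjoint (PuF n t B a i) (PuF n t B a i') := by
  simp only [Finset.disjoint_left]; rintro e he he'
  simp only [PuF, Finset.mem_image, Finset.mem_univ, true_and] at he he'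
  obtain ⟨p, rfl⟩ := he; obtain ⟨q, hq⟩ := he'
  simp_all
lemma disj_Pu_Pv (i : Fin n) (j : Fin t) : Disjoint (PuF n t B a i) (PvF n t B a j) := by
  simp only [Finset.disjoint_left]; rintro e he he'
  simp only [PuF, PvF, Finset.mem_image, Finset.mem_univ, true_and] at he he'
  obtain ⟨p, rfl⟩ := he; obtain ⟨q, hq⟩ := he'
  simp_all
lemma disj_Pu_Pw (i : Fin n) : Disjoint (PuF n t B a i) (PwF n t B a) := by
  simp only [Finset.disjoint_left]; rintro e he he'
  simp only [PuF, PwF, Finset.mem_image, Finset.mem_univ, true_and] at he he'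
  obtain ⟨p, rfl⟩ := he; obtain ⟨q, hq⟩ := he'
  simp_all
lemma disj_Pu_UV (i i' : Fin n) : Disjoint (PuF n t B a i) (UVF n t B a i') := by
  simp only [Finset.disjoint_left]; rintro e he he'
  simp only [PuF, UVF, Finset.mem_image, Finset.mem_univ, true_and] at he he'
  obtain ⟨p, rfl⟩ := he; obtain ⟨q, hq⟩ := he'
  simp_all
lemma disj_Pv_Pv {j j' : Fin t} (h : j ≠ j') : Disjoint (PvF n t B a j) (PvF n t B a j') := by
  simp only [Finset.disjoint_left]; rintro e he he'
  simp only [PvF, Finset.mem_image, Finset.mem_univ, true_and] at he he'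
  obtain ⟨p, rfl⟩ := he; obtain ⟨q, hq⟩ := he'
  simp_all
lemma disj_Pv_Pw (j : Fin t) : Disjoint (PvF n t B a j) (PwF n t B a) := by
  simp only [Finset.disjoint_left]; rintro e he he'
  simp only [PvF, PwF, Finset.mem_image, Finset.mem_univ, true_and] at he he'
  obtain ⟨p, rfl⟩ := he; obtain ⟨q, hq⟩ := he'
  simp_all
lemma disj_Pv_UV (j : Fin t) (i : Fin n) : Disjoint (PvF n t B a j) (UVF n t B a i) := by
  simp only [Finset.disjoint_left]; rintro e he he'
  simp only [PvF, UVF, Finset.mem_image, Finset.mem_univ, true_and] at he he'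
  obtain ⟨p, rfl⟩ := he; obtain ⟨q, hq⟩ := he'
  simp_all
lemma disj_Pw_UV (i : Fin n) : Disjoint (PwF n t B a) (UVF n t B a i) := by
  simp only [Finset.disjoint_left]; rintro e he he'
  simp only [PwF, UVF, Finset.mem_image, Finset.mem_univ, true_and] at he he'
  obtain ⟨p, rfl⟩ := he; obtain ⟨q, hq⟩ := he'
  simp_all
lemma disj_UV_UV {i i' : Fin n} (h : i ≠ i') : Disjoint (UVF n t B a i) (UVF n t B a i') := by
  simp only [Finset.disjoint_left]; rintro e he he'
  simp only [UVF, Finset.mem_image, Finset.mem_univ, true_and] at he he'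
  obtain ⟨p, rfl⟩ := he; obtain ⟨q, hq⟩ := he'
  simp_all
lemma ewn_not_Pu (hn : 0 < n) (i : Fin n) : ewn n t B a hn ∉ PuF n t B a i := by simp
lemma ewn_not_Pv (hn : 0 < n) (j : Fin t) : ewn n t B a hn ∉ PvF n t B a j := by simp
lemma ewn_not_Pw (hn : 0 < n) : ewn n t B a hn ∉ PwF n t B a := by simp
lemma ewn_not_UV (hn : 0 < n) (i : Fin n) : ewn n t B a hn ∉ UVF n t B a i := by simp


lemma adj_uv (i : Fin n) (j : Fin t) : (liGraph n t B a).Adj (vu i) (vv j) := by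
  rw [liGraph, SimpleGraph.fromRel_adj]
  exact ⟨vu_ne_vv, Or.inl (by simp [liRel, vu, vv])⟩

lemma adj_upu (i : Fin n) (p : Fin (a i - 1)) : (liGraph n t B a).Adj (vu i) (vpu ⟨i, p⟩) := by
  rw [liGraph, SimpleGraph.fromRel_adj]
  exact ⟨vu_ne_vpu, Or.inl (by simp [liRel, vu, vpu])⟩

lemma adj_vpv (j : Fin t) (p : Fin (2 * B)) : (liGraph n t B a).Adj (vv j) (vpv (j, p)) := by
  rw [liGraph, SimpleGraph.fromRel_adj]
  exact ⟨vv_ne_vpv, Or.inl (by simp [liRel, vv, vpv])⟩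

lemma adj_wpw (p : Fin (3 * B)) : (liGraph n t B a).Adj vw (vpw p) := by
  rw [liGraph, SimpleGraph.fromRel_adj]
  exact ⟨vw_ne_vpw, Or.inl (by simp [liRel, vw, vpw])⟩

lemma adj_uw {i : Fin n} (hi : (i : ℕ) = n - 1) : (liGraph n t B a).Adj (vu i) vw := by
  rw [liGraph, SimpleGraph.fromRel_adj]
  exact ⟨vu_ne_vw, Or.inl (by simp [liRel, vu, vw, hi])⟩

lemma uv_not_mem_PuF (i i' : Fin n) (j : Fin t) : s(vu i, vv j) ∉ PuF n t B a i' := by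
  simp [PuF, Sym2.eq_iff]

lemma uv_not_mem_PvF (i : Fin n) (j j' : Fin t) : s(vu i, vv j) ∉ PvF n t B a j' := by
  simp [PvF, Sym2.eq_iff]

lemma uv_mem_UVF (i : Fin n) (j : Fin t) : s(vu i, vv j) ∈ UVF n t B a i := by
  simp [UVF]

lemma card_Tj (f : Fin n → Fin t) (ha : ∀ i, 0 < a i) (j : Fin t) :
    (PvF n t B a j ∪ (Finset.univ.filter (fun i => f i = j)).biUnion
      (fun i => insert s(vu i, vv j) (PuF n t B a i))).card
      = 2 * B + ∑ i ∈ Finset.univ.filter (fun i => f i = j), a i := by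
  have hpair : ∀ i1 ∈ Finset.univ.filter (fun i => f i = j),
      ∀ i2 ∈ Finset.univ.filter (fun i => f i = j), i1 ≠ i2 →
      Disjoint (insert s(vu i1, vv j) (PuF n t B a i1))
        (insert s(vu i2, vv j) (PuF n t B a i2)) := by
    intro i1 _ i2 _ hne
    rw [Finset.disjoint_insert_left, Finset.disjoint_insert_right]
    refine ⟨?_, uv_not_mem_PuF _ _ _, disj_Pu_Pu hne⟩
    simp [Sym2.eq_iff, hne]
  have hdisj : Disjoint (PvF n t B a j)
      ((Finset.univ.filter (fun i => f i = j)).biUnion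
        (fun i => insert s(vu i, vv j) (PuF n t B a i))) := by
    rw [Finset.disjoint_biUnion_right]
    intro i _
    rw [Finset.disjoint_insert_right]
    exact ⟨uv_not_mem_PvF _ _ _, (disj_Pu_Pv i j).symm⟩
  rw [Finset.card_union_of_disjoint hdisj, Finset.card_biUnion hpair, card_PvF]
  congr 1
  refine Finset.sum_congr rfl fun i _ => ?_
  rw [Finset.card_insert_of_notMem (uv_not_mem_PuF _ _ _), card_PuF]
  have := ha i; omega


def piReg (n t B : ℕ) (a : Fin n → ℕ) (f : Fin n → Fin t) : LIVertex n t B a → Fin t ⊕ Unit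
  | .inl i => .inl (f i)
  | .inr (.inl j) => .inl j
  | .inr (.inr (.inl s)) => .inl (f s.1)
  | .inr (.inr (.inr (.inl x))) => .inl x.1
  | .inr (.inr (.inr (.inr _))) => .inr ()

@[simp] lemma piReg_vu (f : Fin n → Fin t) (i : Fin n) :
    piReg n t B a f (vu i) = Sum.inl (f i) := rfl
@[simp] lemma piReg_vv (f : Fin n → Fin t) (j : Fin t) :
    piReg n t B a f (vv j) = Sum.inl j := rfl
@[simp] lemma piReg_vpu (f : Fin n → Fin t) (s : Σ i : Fin n, Fin (a i - 1)) :
    piReg n t B a f (vpu s) = Sum.inl (f s.1) := rfl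
@[simp] lemma piReg_vpv (f : Fin n → Fin t) (x : Fin t × Fin (2 * B)) :
    piReg n t B a f (vpv x) = Sum.inl x.1 := rfl
@[simp] lemma piReg_vw (f : Fin n → Fin t) :
    piReg n t B a f (vw : LIVertex n t B a) = Sum.inr () := rfl
@[simp] lemma piReg_vpw (f : Fin n → Fin t) (p : Fin (3 * B)) :
    piReg n t B a f (vpw p) = Sum.inr () := rfl

lemma tsub_mul_helper {t n : ℕ} (ht : 0 < t) : (t - 1) * n + n = t * n := by
  cases t with
  | zero => omega
  | succ m => simp [Nat.succ_mul]


end VI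

open VI SimpleGraph in
/-- There is `F ⊆ E(G)` with `|F| + max_{C ∈ cc(G−F)} |E(C)| ≤ k` iff `{1, …, n}` can be
partitioned into `t` parts of weight `B` each. -/
theorem statement13 (n t B k : ℕ) (hn : 2 ≤ n) (ht : 0 < t) (hB : 0 < B)
    (a : Fin n → ℕ) (ha : ∀ i, 0 < a i) (hsum : ∑ i, a i = t * B)
    (hbig : ∀ i, t * n < a i) (hk : k = (t - 1) * n + 3 * B + 1) :
    (∃ F : Set (Sym2 (LIVertex n t B a)), F ⊆ (liGraph n t B a).edgeSet ∧
      F.ncard + sSup {m | ∃ C : ((liGraph n t B a).deleteEdges F).ConnectedComponent,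
        m = {e ∈ ((liGraph n t B a).deleteEdges F).edgeSet |
              ∀ v ∈ e, v ∈ C.supp}.ncard} ≤ k) ↔
      ∃ f : Fin n → Fin t,
        ∀ j : Fin t, ∑ i ∈ Finset.univ.filter (fun i => f i = j), a i = B := by

  have hn0 : 0 < n := by omega
  have hmul : (t - 1) * n + n = t * n := tsub_mul_helper ht
  constructor
  · rintro ⟨F, hFE, hcost⟩
    classical
    set H := (liGraph n t B a).deleteEdges F with hH
    set M := sSup {m | ∃ C : H.ConnectedComponent,
        m = {e ∈ H.edgeSet | ∀ v ∈ e, v ∈ C.supp}.ncard} with hM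
    have hFfin : F.Finite := Set.toFinite F
    set Ff := hFfin.toFinset with hFfdef
    have hmemF : ∀ {e}, e ∈ Ff ↔ e ∈ F := fun {e} => hFfin.mem_toFinset
    have hncard : F.ncard = Ff.card := by
      rw [← Set.ncard_coe_finset, hFfin.coe_toFinset]
    rw [hncard] at hcost
    have hMge : ∀ (C : H.ConnectedComponent) (T : Finset (Sym2 (LIVertex n t B a))),
        (↑T ⊆ {e ∈ H.edgeSet | ∀ v ∈ e, v ∈ C.supp}) → T.card ≤ M := by
      intro C T hT
      rw [hM]
      exact card_le_M hT
    have hFge : ∀ (T : Finset (Sym2 (LIVertex n t B a))), T ⊆ Ff → T.card ≤ Ff.card :=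
      fun T hT => Finset.card_le_card hT
    set un : Fin n := ⟨n - 1, Nat.sub_lt hn0 one_pos⟩ with hun
    have hHadj : ∀ {x y : LIVertex n t B a},
        (liGraph n t B a).Adj x y → s(x, y) ∉ F → H.Adj x y := by
      intro x y h1 h2
      rw [hH, SimpleGraph.deleteEdges_adj]
      exact ⟨h1, h2⟩
    have hsupp0 : ∀ x : LIVertex n t B a, x ∈ (H.connectedComponentMk x).supp := fun x => by
      rw [SimpleGraph.ConnectedComponent.mem_supp_iff]
    have hnt : n * t = t * n := Nat.mul_comm n t
    -- Step 1 : the edge {w, u_n} is cut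
    have hew : ewn n t B a hn0 ∈ F := by
      by_contra hewc
      have hadj : H.Adj vw (vu un) := hHadj (adj_uw rfl).symm hewc
      have hvwC : (vw : LIVertex n t B a) ∈ (H.connectedComponentMk vw).supp := hsupp0 _
      have hvuC : vu un ∈ (H.connectedComponentMk (vw : LIVertex n t B a)).supp :=
        mem_supp_of_adj hvwC hadj
      have h1 : (insert (ewn n t B a hn0) ((PwF n t B a \ Ff) ∪ (PuF n t B a un \ Ff))).card
          ≤ M := by
        apply hMge (H.connectedComponentMk vw)
        intro e he
        simp only [Finset.coe_insert, Set.mem_insert_iff, Finset.coe_union, Set.mem_union,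
          Finset.mem_coe, Finset.mem_sdiff] at he
        rcases he with rfl | ⟨hePw, heF⟩ | ⟨hePu, heF⟩
        · exact edge_mem_edgesOf hadj hvwC
        · simp only [PwF, Finset.mem_image, Finset.mem_univ, true_and] at hePw
          obtain ⟨p, rfl⟩ := hePw
          exact edge_mem_edgesOf (hHadj (adj_wpw p) fun hc => heF (hmemF.2 hc)) hvwC
        · simp only [PuF, Finset.mem_image, Finset.mem_univ, true_and] at hePu
          obtain ⟨p, rfl⟩ := hePu
          exact edge_mem_edgesOf (hHadj (adj_upu un p) fun hc => heF (hmemF.2 hc)) hvuC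
      have h2 : ((PwF n t B a ∩ Ff) ∪ (PuF n t B a un ∩ Ff)).card ≤ Ff.card :=
        hFge _ (Finset.union_subset Finset.inter_subset_right Finset.inter_subset_right)
      have e1 : (insert (ewn n t B a hn0) ((PwF n t B a \ Ff) ∪ (PuF n t B a un \ Ff))).card
          = (PwF n t B a \ Ff).card + (PuF n t B a un \ Ff).card + 1 := by
        have hnm : ewn n t B a hn0 ∉ (PwF n t B a \ Ff) ∪ (PuF n t B a un \ Ff) := by
          simp only [Finset.mem_union, Finset.mem_sdiff, not_or]
          exact ⟨fun h => ewn_not_Pw hn0 h.1, fun h => ewn_not_Pu hn0 un h.1⟩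
        have hdj : Disjoint (PwF n t B a \ Ff) (PuF n t B a un \ Ff) :=
          (disj_Pu_Pw un).symm.mono Finset.sdiff_subset Finset.sdiff_subset
        rw [Finset.card_insert_of_notMem hnm, Finset.card_union_of_disjoint hdj]
      have e2 : ((PwF n t B a ∩ Ff) ∪ (PuF n t B a un ∩ Ff)).card
          = (PwF n t B a ∩ Ff).card + (PuF n t B a un ∩ Ff).card :=
        Finset.card_union_of_disjoint
          ((disj_Pu_Pw un).symm.mono Finset.inter_subset_left Finset.inter_subset_left)
      have i1 : (PwF n t B a ∩ Ff).card + (PwF n t B a \ Ff).card = 3 * B := by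
        rw [Finset.card_inter_add_card_sdiff, card_PwF]
      have i2 : (PuF n t B a un ∩ Ff).card + (PuF n t B a un \ Ff).card = a un - 1 := by
        rw [Finset.card_inter_add_card_sdiff, card_PuF]
      have hbn := hbig un
      have hbn' := ha un
      omega
    -- Step 2 : no u_i has two uncut edges towards distinct v_j
    have huv2 : ∀ (i : Fin n) (j j' : Fin t), j ≠ j' →
        s(vu (n := n) (t := t) (B := B) (a := a) i, vv j) ∉ F →
        s(vu (n := n) (t := t) (B := B) (a := a) i, vv j') ∉ F → False := by
      intro i j j' hjj hj hj'
      have hadj : H.Adj (vu i) (vv j) := hHadj (adj_uv i j) hj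
      have hadj' : H.Adj (vu i) (vv j') := hHadj (adj_uv i j') hj'
      have hvu : (vu i : LIVertex n t B a) ∈ (H.connectedComponentMk (vu i)).supp := hsupp0 _
      have hvv : (vv j : LIVertex n t B a) ∈ (H.connectedComponentMk (vu i)).supp :=
        mem_supp_of_adj hvu hadj
      have hvv' : (vv j' : LIVertex n t B a) ∈ (H.connectedComponentMk (vu i)).supp :=
        mem_supp_of_adj hvu hadj'
      have h1 : (insert s(vu i, vv j) (insert s(vu i, vv j')
          ((PuF n t B a i \ Ff) ∪ ((PvF n t B a j \ Ff) ∪ (PvF n t B a j' \ Ff))))).card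
          ≤ M := by
        apply hMge (H.connectedComponentMk (vu i))
        intro e he
        simp only [Finset.coe_insert, Set.mem_insert_iff, Finset.coe_union, Set.mem_union,
          Finset.mem_coe, Finset.mem_sdiff] at he
        rcases he with rfl | rfl | ⟨heP, heF⟩ | ⟨heP, heF⟩ | ⟨heP, heF⟩
        · exact edge_mem_edgesOf hadj hvu
        · exact edge_mem_edgesOf hadj' hvu
        · simp only [PuF, Finset.mem_image, Finset.mem_univ, true_and] at heP
          obtain ⟨p, rfl⟩ := heP
          exact edge_mem_edgesOf (hHadj (adj_upu i p) fun hc => heF (hmemF.2 hc)) hvu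
        · simp only [PvF, Finset.mem_image, Finset.mem_univ, true_and] at heP
          obtain ⟨p, rfl⟩ := heP
          exact edge_mem_edgesOf (hHadj (adj_vpv j p) fun hc => heF (hmemF.2 hc)) hvv
        · simp only [PvF, Finset.mem_image, Finset.mem_univ, true_and] at heP
          obtain ⟨p, rfl⟩ := heP
          exact edge_mem_edgesOf (hHadj (adj_vpv j' p) fun hc => heF (hmemF.2 hc)) hvv'
      have hTcard : (insert s(vu i, vv j) (insert s(vu i, vv j')
          ((PuF n t B a i \ Ff) ∪ ((PvF n t B a j \ Ff) ∪ (PvF n t B a j' \ Ff))))).card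
          = (PuF n t B a i \ Ff).card + (PvF n t B a j \ Ff).card
            + (PvF n t B a j' \ Ff).card + 2 := by
        have d1 : Disjoint (PvF n t B a j \ Ff) (PvF n t B a j' \ Ff) :=
          (disj_Pv_Pv hjj).mono Finset.sdiff_subset Finset.sdiff_subset
        have d2 : Disjoint (PuF n t B a i \ Ff)
            ((PvF n t B a j \ Ff) ∪ (PvF n t B a j' \ Ff)) := by
          rw [Finset.disjoint_union_right]
          exact ⟨(disj_Pu_Pv i j).mono Finset.sdiff_subset Finset.sdiff_subset,
            (disj_Pu_Pv i j').mono Finset.sdiff_subset Finset.sdiff_subset⟩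
        have m2 : s(vu (n := n) (t := t) (B := B) (a := a) i, vv j') ∉
            (PuF n t B a i \ Ff) ∪ ((PvF n t B a j \ Ff) ∪ (PvF n t B a j' \ Ff)) := by
          simp only [Finset.mem_union, Finset.mem_sdiff, not_or]
          exact ⟨fun h => uv_not_mem_PuF i i j' h.1,
            fun h => uv_not_mem_PvF i j' j h.1, fun h => uv_not_mem_PvF i j' j' h.1⟩
        have m1 : s(vu (n := n) (t := t) (B := B) (a := a) i, vv j) ∉ insert s(vu i, vv j')
            ((PuF n t B a i \ Ff) ∪ ((PvF n t B a j \ Ff) ∪ (PvF n t B a j' \ Ff))) := by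
          simp only [Finset.mem_insert, Finset.mem_union, Finset.mem_sdiff, not_or]
          refine ⟨?_, fun h => uv_not_mem_PuF i i j h.1,
            fun h => uv_not_mem_PvF i j j h.1, fun h => uv_not_mem_PvF i j j' h.1⟩
          simp [Sym2.eq_iff, hjj]
        rw [Finset.card_insert_of_notMem m1, Finset.card_insert_of_notMem m2,
          Finset.card_union_of_disjoint d2, Finset.card_union_of_disjoint d1]
        ring
      have h2 : ((PuF n t B a i ∩ Ff) ∪ ((PvF n t B a j ∩ Ff) ∪ (PvF n t B a j' ∩ Ff))).card
          ≤ Ff.card :=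
        hFge _ (Finset.union_subset Finset.inter_subset_right
          (Finset.union_subset Finset.inter_subset_right Finset.inter_subset_right))
      have e2 : ((PuF n t B a i ∩ Ff) ∪ ((PvF n t B a j ∩ Ff) ∪ (PvF n t B a j' ∩ Ff))).card
          = (PuF n t B a i ∩ Ff).card + (PvF n t B a j ∩ Ff).card
            + (PvF n t B a j' ∩ Ff).card := by
        rw [Finset.card_union_of_disjoint, Finset.card_union_of_disjoint]
        · ring
        · exact (disj_Pv_Pv hjj).mono Finset.inter_subset_left Finset.inter_subset_left
        · rw [Finset.disjoint_union_right]
          exact ⟨(disj_Pu_Pv i j).mono Finset.inter_subset_left Finset.inter_subset_left,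
            (disj_Pu_Pv i j').mono Finset.inter_subset_left Finset.inter_subset_left⟩
      have i1 : (PuF n t B a i ∩ Ff).card + (PuF n t B a i \ Ff).card = a i - 1 := by
        rw [Finset.card_inter_add_card_sdiff, card_PuF]
      have i2 : (PvF n t B a j ∩ Ff).card + (PvF n t B a j \ Ff).card = 2 * B := by
        rw [Finset.card_inter_add_card_sdiff, card_PvF]
      have i3 : (PvF n t B a j' ∩ Ff).card + (PvF n t B a j' \ Ff).card = 2 * B := by
        rw [Finset.card_inter_add_card_sdiff, card_PvF]
      have hbi := hbig i
      have hbi' := ha i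
      omega
    -- Step 3 : global counting
    have dPuPu : ∀ i1 ∈ Finset.univ, ∀ i2 ∈ Finset.univ, i1 ≠ i2 →
        Disjoint (PuF n t B a i1 ∩ Ff) (PuF n t B a i2 ∩ Ff) := fun i1 _ i2 _ h =>
      (disj_Pu_Pu h).mono Finset.inter_subset_left Finset.inter_subset_left
    have dPvPv : ∀ j1 ∈ Finset.univ, ∀ j2 ∈ Finset.univ, j1 ≠ j2 →
        Disjoint (PvF n t B a j1 ∩ Ff) (PvF n t B a j2 ∩ Ff) := fun j1 _ j2 _ h =>
      (disj_Pv_Pv h).mono Finset.inter_subset_left Finset.inter_subset_left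
    have dUVUV : ∀ i1 ∈ Finset.univ, ∀ i2 ∈ Finset.univ, i1 ≠ i2 →
        Disjoint (UVF n t B a i1 ∩ Ff) (UVF n t B a i2 ∩ Ff) := fun i1 _ i2 _ h =>
      (disj_UV_UV h).mono Finset.inter_subset_left Finset.inter_subset_left
    have hXsub : ((Finset.univ.biUnion fun i => PuF n t B a i ∩ Ff) ∪
        ((Finset.univ.biUnion fun j => PvF n t B a j ∩ Ff) ∪
         ((PwF n t B a ∩ Ff) ∪
          ((Finset.univ.biUnion fun i => UVF n t B a i ∩ Ff) ∪ {ewn n t B a hn0})))).card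
        ≤ Ff.card := by
      apply hFge
      refine Finset.union_subset ?_ (Finset.union_subset ?_ (Finset.union_subset ?_
        (Finset.union_subset ?_ ?_)))
      · exact Finset.biUnion_subset.2 fun i _ => Finset.inter_subset_right
      · exact Finset.biUnion_subset.2 fun j _ => Finset.inter_subset_right
      · exact Finset.inter_subset_right
      · exact Finset.biUnion_subset.2 fun i _ => Finset.inter_subset_right
      · exact Finset.singleton_subset_iff.2 (hmemF.2 hew)
    have eX : ((Finset.univ.biUnion fun i => PuF n t B a i ∩ Ff) ∪
        ((Finset.univ.biUnion fun j => PvF n t B a j ∩ Ff) ∪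
         ((PwF n t B a ∩ Ff) ∪
          ((Finset.univ.biUnion fun i => UVF n t B a i ∩ Ff) ∪ {ewn n t B a hn0})))).card
        = (∑ i, (PuF n t B a i ∩ Ff).card) + ((∑ j, (PvF n t B a j ∩ Ff).card) +
          ((PwF n t B a ∩ Ff).card + ((∑ i, (UVF n t B a i ∩ Ff).card) + 1))) := by
      have dUVe : Disjoint (Finset.univ.biUnion fun i => UVF n t B a i ∩ Ff)
          ({ewn n t B a hn0} : Finset (Sym2 (LIVertex n t B a))) := by
        rw [Finset.disjoint_biUnion_left]
        intro i _
        rw [Finset.disjoint_singleton_right]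
        exact fun h => ewn_not_UV hn0 i (Finset.mem_inter.1 h).1
      have dPw4 : Disjoint (PwF n t B a ∩ Ff)
          ((Finset.univ.biUnion fun i => UVF n t B a i ∩ Ff) ∪ {ewn n t B a hn0}) := by
        rw [Finset.disjoint_union_right, Finset.disjoint_biUnion_right]
        refine ⟨fun i _ => (disj_Pw_UV i).mono Finset.inter_subset_left Finset.inter_subset_left, ?_⟩
        rw [Finset.disjoint_singleton_right]
        exact fun h => ewn_not_Pw hn0 (Finset.mem_inter.1 h).1
      have dPv3 : Disjoint (Finset.univ.biUnion fun j => PvF n t B a j ∩ Ff)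
          ((PwF n t B a ∩ Ff) ∪
            ((Finset.univ.biUnion fun i => UVF n t B a i ∩ Ff) ∪ {ewn n t B a hn0})) := by
        rw [Finset.disjoint_biUnion_left]
        intro j _
        rw [Finset.disjoint_union_right, Finset.disjoint_union_right,
          Finset.disjoint_biUnion_right]
        refine ⟨(disj_Pv_Pw j).mono Finset.inter_subset_left Finset.inter_subset_left,
          fun i _ => (disj_Pv_UV j i).mono Finset.inter_subset_left Finset.inter_subset_left, ?_⟩
        rw [Finset.disjoint_singleton_right]
        exact fun h => ewn_not_Pv hn0 j (Finset.mem_inter.1 h).1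
      have dPu2 : Disjoint (Finset.univ.biUnion fun i => PuF n t B a i ∩ Ff)
          ((Finset.univ.biUnion fun j => PvF n t B a j ∩ Ff) ∪
           ((PwF n t B a ∩ Ff) ∪
            ((Finset.univ.biUnion fun i => UVF n t B a i ∩ Ff) ∪ {ewn n t B a hn0}))) := by
        rw [Finset.disjoint_biUnion_left]
        intro i _
        rw [Finset.disjoint_union_right, Finset.disjoint_union_right,
          Finset.disjoint_union_right, Finset.disjoint_biUnion_right,
          Finset.disjoint_biUnion_right]
        refine ⟨fun j _ => (disj_Pu_Pv i j).mono Finset.inter_subset_left Finset.inter_subset_left,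
          (disj_Pu_Pw i).mono Finset.inter_subset_left Finset.inter_subset_left,
          fun i' _ => (disj_Pu_UV i i').mono Finset.inter_subset_left Finset.inter_subset_left, ?_⟩
        rw [Finset.disjoint_singleton_right]
        exact fun h => ewn_not_Pu hn0 i (Finset.mem_inter.1 h).1
      rw [Finset.card_union_of_disjoint dPu2, Finset.card_union_of_disjoint dPv3,
        Finset.card_union_of_disjoint dPw4, Finset.card_union_of_disjoint dUVe,
        Finset.card_biUnion dPuPu, Finset.card_biUnion dPvPv, Finset.card_biUnion dUVUV,
        Finset.card_singleton]
    -- M + q_w ≥ 3B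
    have hM3B : (PwF n t B a \ Ff).card ≤ M := by
      apply hMge (H.connectedComponentMk vw)
      intro e he
      simp only [Finset.coe_sdiff, Set.mem_diff, Finset.mem_coe, Finset.mem_sdiff] at he
      obtain ⟨hePw, heF⟩ := he
      simp only [PwF, Finset.mem_image, Finset.mem_univ, true_and] at hePw
      obtain ⟨p, rfl⟩ := hePw
      exact edge_mem_edgesOf (hHadj (adj_wpw p) fun hc => heF (hmemF.2 hc)) (hsupp0 _)
    have iPw : (PwF n t B a ∩ Ff).card + (PwF n t B a \ Ff).card = 3 * B := by
      rw [Finset.card_inter_add_card_sdiff, card_PwF]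
    -- each u_i has at most one uncut uv-edge
    have hd : ∀ i, (UVF n t B a i \ Ff).card ≤ 1 := by
      intro i
      rw [Finset.card_le_one]
      intro e he e' he'
      rw [Finset.mem_sdiff] at he he'
      obtain ⟨he1, he2⟩ := he
      obtain ⟨he1', he2'⟩ := he'
      simp only [UVF, Finset.mem_image, Finset.mem_univ, true_and] at he1 he1'
      obtain ⟨j, rfl⟩ := he1
      obtain ⟨j', rfl⟩ := he1'
      by_contra hne
      have hjj : j ≠ j' := fun h => hne (by rw [h])
      exact huv2 i j j' hjj (fun hc => he2 (hmemF.2 hc)) (fun hc => he2' (hmemF.2 hc))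
    have hdsum : ∑ i, (UVF n t B a i \ Ff).card ≤ n := by
      calc ∑ i, (UVF n t B a i \ Ff).card ≤ Finset.univ.card • 1 :=
            Finset.sum_le_card_nsmul _ _ 1 fun i _ => hd i
        _ = n := by simp
    have iUVsum : (∑ i, (UVF n t B a i ∩ Ff).card) + (∑ i, (UVF n t B a i \ Ff).card)
        = n * t := by
      rw [← Finset.sum_add_distrib]
      have : ∀ i ∈ Finset.univ, (UVF n t B a i ∩ Ff).card + (UVF n t B a i \ Ff).card = t :=
        fun i _ => by rw [Finset.card_inter_add_card_sdiff, card_UVF]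
      rw [Finset.sum_congr rfl this, Finset.sum_const, Finset.card_univ, Fintype.card_fin,
        smul_eq_mul]
    -- conclude vanishing of pendant cuts and d_i = 1
    have hkey : (∑ i, (PuF n t B a i ∩ Ff).card) = 0 ∧ (∑ j, (PvF n t B a j ∩ Ff).card) = 0 ∧
        (∑ i, (UVF n t B a i \ Ff).card) = n := by omega
    obtain ⟨hP0, hQ0, hD⟩ := hkey
    have hPu0 : ∀ i, PuF n t B a i ∩ Ff = ∅ := fun i =>
      Finset.card_eq_zero.1 ((Finset.sum_eq_zero_iff.1 hP0) i (Finset.mem_univ i))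
    have hPv0 : ∀ j, PvF n t B a j ∩ Ff = ∅ := fun j =>
      Finset.card_eq_zero.1 ((Finset.sum_eq_zero_iff.1 hQ0) j (Finset.mem_univ j))
    have hd1 : ∀ i, (UVF n t B a i \ Ff).card = 1 := by
      intro i
      by_contra hne
      have h0 : (UVF n t B a i \ Ff).card = 0 := by have := hd i; omega
      have hsplit : ∑ i', (UVF n t B a i' \ Ff).card
          = (∑ i' ∈ Finset.univ.erase i, (UVF n t B a i' \ Ff).card)
            + (UVF n t B a i \ Ff).card :=
        (Finset.sum_erase_add _ _ (Finset.mem_univ i)).symm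
      have hb : (∑ i' ∈ Finset.univ.erase i, (UVF n t B a i' \ Ff).card)
          ≤ (Finset.univ.erase i).card • 1 :=
        Finset.sum_le_card_nsmul _ _ 1 fun i' _ => hd i'
      rw [Finset.card_erase_of_mem (Finset.mem_univ i), Finset.card_univ, Fintype.card_fin,
        smul_eq_mul, mul_one] at hb
      omega
    -- the partition map
    have hex : ∀ i : Fin n, ∃ j : Fin t,
        s(vu (n := n) (t := t) (B := B) (a := a) i, vv j) ∉ F := by
      intro i
      obtain ⟨e, heq⟩ := Finset.card_eq_one.1 (hd1 i)
      have he : e ∈ UVF n t B a i \ Ff := by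
        rw [heq]
        exact Finset.mem_singleton_self e
      rw [Finset.mem_sdiff] at he
      obtain ⟨he1, he2⟩ := he
      simp only [UVF, Finset.mem_image, Finset.mem_univ, true_and] at he1
      obtain ⟨j, rfl⟩ := he1
      exact ⟨j, fun hc => he2 (hmemF.2 hc)⟩
    choose f hf using hex
    refine ⟨f, ?_⟩
    -- per-part upper bound
    have hAj : ∀ j : Fin t, (∑ i ∈ Finset.univ.filter (fun i => f i = j), a i) ≤ B := by
      intro j
      have hvv : (vv j : LIVertex n t B a) ∈ (H.connectedComponentMk (vv j)).supp := hsupp0 _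
      have h1 : (PvF n t B a j ∪ (Finset.univ.filter (fun i => f i = j)).biUnion
          (fun i => insert s(vu i, vv j) (PuF n t B a i))).card ≤ M := by
        apply hMge (H.connectedComponentMk (vv j))
        intro e he
        simp only [Finset.coe_union, Set.mem_union, Finset.mem_coe, Finset.mem_biUnion,
          Finset.mem_filter, Finset.mem_univ, true_and, Finset.mem_insert] at he
        rcases he with hePv | ⟨i, hfi, rfl | heP⟩
        · simp only [PvF, Finset.mem_image, Finset.mem_univ, true_and] at hePv
          obtain ⟨p, rfl⟩ := hePv
          have hnc : s(vv (n := n) (t := t) (B := B) (a := a) j, vpv (j, p)) ∉ F := by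
            intro hc
            have hmem : s(vv (n := n) (t := t) (B := B) (a := a) j, vpv (j, p))
                ∈ PvF n t B a j ∩ Ff :=
              Finset.mem_inter.2 ⟨by simp [PvF], hmemF.2 hc⟩
            rw [hPv0 j] at hmem
            exact absurd hmem (Finset.notMem_empty _)
          exact edge_mem_edgesOf (hHadj (adj_vpv j p) hnc) hvv
        · have hnc : s(vu (n := n) (t := t) (B := B) (a := a) i, vv j) ∉ F := hfi ▸ hf i
          have hvuC := mem_supp_of_adj hvv (hHadj (adj_uv i j) hnc).symm
          exact edge_mem_edgesOf (hHadj (adj_uv i j) hnc) hvuC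
        · simp only [PuF, Finset.mem_image, Finset.mem_univ, true_and] at heP
          obtain ⟨p, rfl⟩ := heP
          have hnc : s(vu (n := n) (t := t) (B := B) (a := a) i, vpu ⟨i, p⟩) ∉ F := by
            intro hc
            have hmem : s(vu (n := n) (t := t) (B := B) (a := a) i, vpu ⟨i, p⟩)
                ∈ PuF n t B a i ∩ Ff :=
              Finset.mem_inter.2 ⟨by simp [PuF], hmemF.2 hc⟩
            rw [hPu0 i] at hmem
            exact absurd hmem (Finset.notMem_empty _)
          have hncuv : s(vu (n := n) (t := t) (B := B) (a := a) i, vv j) ∉ F := hfi ▸ hf i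
          have hvuC := mem_supp_of_adj hvv (hHadj (adj_uv i j) hncuv).symm
          exact edge_mem_edgesOf (hHadj (adj_upu i p) hnc) hvuC
      have e1 : (PvF n t B a j ∪ (Finset.univ.filter (fun i => f i = j)).biUnion
          (fun i => insert s(vu i, vv j) (PuF n t B a i))).card
          = 2 * B + ∑ i ∈ Finset.univ.filter (fun i => f i = j), a i := card_Tj f ha j
      have h2 : ((PwF n t B a ∩ Ff) ∪
          ((Finset.univ.biUnion fun i => UVF n t B a i ∩ Ff) ∪ {ewn n t B a hn0})).card
          ≤ Ff.card := by
        apply hFge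
        refine Finset.union_subset Finset.inter_subset_right (Finset.union_subset ?_ ?_)
        · exact Finset.biUnion_subset.2 fun i _ => Finset.inter_subset_right
        · exact Finset.singleton_subset_iff.2 (hmemF.2 hew)
      have e2 : ((PwF n t B a ∩ Ff) ∪
          ((Finset.univ.biUnion fun i => UVF n t B a i ∩ Ff) ∪ {ewn n t B a hn0})).card
          = (PwF n t B a ∩ Ff).card + ((∑ i, (UVF n t B a i ∩ Ff).card) + 1) := by
        have dUVe : Disjoint (Finset.univ.biUnion fun i => UVF n t B a i ∩ Ff)
            ({ewn n t B a hn0} : Finset (Sym2 (LIVertex n t B a))) := by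
          rw [Finset.disjoint_biUnion_left]
          intro i _
          rw [Finset.disjoint_singleton_right]
          exact fun h => ewn_not_UV hn0 i (Finset.mem_inter.1 h).1
        have dPw4 : Disjoint (PwF n t B a ∩ Ff)
            ((Finset.univ.biUnion fun i => UVF n t B a i ∩ Ff) ∪ {ewn n t B a hn0}) := by
          rw [Finset.disjoint_union_right, Finset.disjoint_biUnion_right]
          refine ⟨fun i _ => (disj_Pw_UV i).mono Finset.inter_subset_left
            Finset.inter_subset_left, ?_⟩
          rw [Finset.disjoint_singleton_right]
          exact fun h => ewn_not_Pw hn0 (Finset.mem_inter.1 h).1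
        rw [Finset.card_union_of_disjoint dPw4, Finset.card_union_of_disjoint dUVe,
          Finset.card_biUnion dUVUV, Finset.card_singleton]
      omega
    -- conclude the exact equality
    have hsumA : ∑ j, ∑ i ∈ Finset.univ.filter (fun i => f i = j), a i = t * B := by
      rw [Finset.sum_fiberwise]
      exact hsum
    intro j
    by_contra hjne
    have hlt : ∑ i ∈ Finset.univ.filter (fun i => f i = j), a i < B :=
      lt_of_le_of_ne (hAj j) hjne
    have hstrict : ∑ j', ∑ i ∈ Finset.univ.filter (fun i => f i = j'), a i
        < ∑ _j' : Fin t, B :=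
      Finset.sum_lt_sum (fun j' _ => hAj j') ⟨j, Finset.mem_univ j, hlt⟩
    rw [hsumA, Finset.sum_const, Finset.card_univ, Fintype.card_fin, smul_eq_mul] at hstrict
    omega

  · rintro ⟨f, hf⟩
    classical
    set Fs : Finset (Sym2 (LIVertex n t B a)) := insert (ewn n t B a hn0)
      ((Finset.univ.filter (fun p : Fin n × Fin t => ¬ f p.1 = p.2)).image
        fun p => s(vu p.1, vv p.2)) with hFs
    refine ⟨(↑Fs : Set (Sym2 (LIVertex n t B a))), ?_, ?_⟩
    · intro e he
      rw [Finset.mem_coe, hFs, Finset.mem_insert] at he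
      rcases he with rfl | he
      · exact (SimpleGraph.mem_edgeSet _).2 (adj_uw rfl).symm
      · rw [Finset.mem_image] at he
        obtain ⟨p, _, rfl⟩ := he
        exact (SimpleGraph.mem_edgeSet _).2 (adj_uv p.1 p.2)
    · have hnt : n * t = t * n := Nat.mul_comm n t
      have hmemFs : ∀ (i : Fin n) (j : Fin t), f i ≠ j →
          s(vu (n := n) (t := t) (B := B) (a := a) i, vv j) ∈ Fs := by
        intro i j hij
        rw [hFs]
        exact Finset.mem_insert_of_mem (Finset.mem_image.2
          ⟨(i, j), Finset.mem_filter.2 ⟨Finset.mem_univ _, hij⟩, rfl⟩)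
      have hpi : ∀ {x y : LIVertex n t B a},
          ((liGraph n t B a).deleteEdges (↑Fs : Set (Sym2 (LIVertex n t B a)))).Adj x y →
          piReg n t B a f x = piReg n t B a f y := by
        intro x y hxy
        rw [SimpleGraph.deleteEdges_adj] at hxy
        obtain ⟨hG, hnF⟩ := hxy
        rcases liAdj_cases hG with ⟨i, j, he⟩ | ⟨p, he⟩ | ⟨j, p, he⟩ | ⟨p, he⟩ | ⟨i, hi, he⟩
        · have hfij : f i = j := by
            by_contra hij
            rw [he] at hnF
            exact hnF (Finset.mem_coe.2 (hmemFs i j hij))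
          rw [Sym2.eq_iff] at he
          rcases he with ⟨rfl, rfl⟩ | ⟨rfl, rfl⟩ <;> simp [hfij]
        · rw [Sym2.eq_iff] at he
          rcases he with ⟨rfl, rfl⟩ | ⟨rfl, rfl⟩ <;> simp
        · rw [Sym2.eq_iff] at he
          rcases he with ⟨rfl, rfl⟩ | ⟨rfl, rfl⟩ <;> simp
        · rw [Sym2.eq_iff] at he
          rcases he with ⟨rfl, rfl⟩ | ⟨rfl, rfl⟩ <;> simp
        · exfalso
          apply hnF
          rw [he]
          have hiun : i = (⟨n - 1, Nat.sub_lt hn0 one_pos⟩ : Fin n) := Fin.ext (by rw [hi])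
          rw [hiun]
          rw [Finset.mem_coe, hFs]
          have : s(vu (n := n) (t := t) (B := B) (a := a)
              (⟨n - 1, Nat.sub_lt hn0 one_pos⟩ : Fin n), vw) = ewn n t B a hn0 := Sym2.eq_swap
          rw [this]
          exact Finset.mem_insert_self _ _
      have hble : sSup {m | ∃ C : ((liGraph n t B a).deleteEdges
          (↑Fs : Set (Sym2 (LIVertex n t B a)))).ConnectedComponent,
          m = {e ∈ ((liGraph n t B a).deleteEdges
            (↑Fs : Set (Sym2 (LIVertex n t B a)))).edgeSet |
            ∀ v ∈ e, v ∈ C.supp}.ncard} ≤ 3 * B := by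
        haveI : Nonempty (LIVertex n t B a) := ⟨vw⟩
        apply M_le
        intro C
        obtain ⟨x0, rfl⟩ := C.exists_rep
        have hx0 : x0 ∈ (((liGraph n t B a).deleteEdges
            (↑Fs : Set (Sym2 (LIVertex n t B a)))).connectedComponentMk x0).supp := by
          rw [SimpleGraph.ConnectedComponent.mem_supp_iff]
        rcases hreg : piReg n t B a f x0 with j | u
        · -- component inside the region of v_j
          have hsub : {e ∈ ((liGraph n t B a).deleteEdges
              (↑Fs : Set (Sym2 (LIVertex n t B a)))).edgeSet |
              ∀ v ∈ e, v ∈ (((liGraph n t B a).deleteEdges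
                (↑Fs : Set (Sym2 (LIVertex n t B a)))).connectedComponentMk x0).supp}
              ⊆ ↑(PvF n t B a j ∪ (Finset.univ.filter (fun i => f i = j)).biUnion
                (fun i => insert s(vu i, vv j) (PuF n t B a i))) := by
            intro e he
            induction e using Sym2.ind with
            | _ x y =>
            obtain ⟨heE, hsup⟩ := he
            rw [SimpleGraph.mem_edgeSet] at heE
            have hrx : piReg n t B a f x = Sum.inl j := by
              rw [← hreg]
              exact pi_const_on_supp hpi (hsup x (Sym2.mem_mk_left x y)) hx0
            have hry : piReg n t B a f y = Sum.inl j := by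
              rw [← hreg]
              exact pi_const_on_supp hpi (hsup y (Sym2.mem_mk_right x y)) hx0
            have hG : (liGraph n t B a).Adj x y := (SimpleGraph.deleteEdges_adj.1 heE).1
            rw [Finset.coe_union, Set.mem_union]
            rcases liAdj_cases hG with ⟨i, j', he⟩ | ⟨p, he⟩ | ⟨j', p, he⟩ | ⟨p, he⟩ | ⟨i, hi, he⟩
            · have h12 : f i = j ∧ j' = j := by
                rcases Sym2.eq_iff.1 he with ⟨rfl, rfl⟩ | ⟨rfl, rfl⟩
                · simp only [piReg_vu, Sum.inl.injEq] at hrx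
                  simp only [piReg_vv, Sum.inl.injEq] at hry
                  exact ⟨hrx, hry⟩
                · simp only [piReg_vv, Sum.inl.injEq] at hrx
                  simp only [piReg_vu, Sum.inl.injEq] at hry
                  exact ⟨hry, hrx⟩
              right
              rw [Finset.mem_coe, Finset.mem_biUnion]
              refine ⟨i, Finset.mem_filter.2 ⟨Finset.mem_univ _, h12.1⟩, ?_⟩
              rw [he, h12.2]
              exact Finset.mem_insert_self _ _
            · have hfp : f p.1 = j := by
                rcases Sym2.eq_iff.1 he with ⟨rfl, rfl⟩ | ⟨rfl, rfl⟩
                · simpa using hrx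
                · simpa using hry
              right
              rw [Finset.mem_coe, Finset.mem_biUnion]
              refine ⟨p.1, Finset.mem_filter.2 ⟨Finset.mem_univ _, hfp⟩, ?_⟩
              refine Finset.mem_insert_of_mem ?_
              rw [he]
              simp [PuF]
            · have hj' : j' = j := by
                rcases Sym2.eq_iff.1 he with ⟨rfl, rfl⟩ | ⟨rfl, rfl⟩
                · simpa using hrx
                · simpa using hry
              left
              rw [Finset.mem_coe, he, hj']
              simp [PvF]
            · exfalso
              rcases Sym2.eq_iff.1 he with ⟨rfl, rfl⟩ | ⟨rfl, rfl⟩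
              · simp at hrx
              · simp at hry
            · exfalso
              rcases Sym2.eq_iff.1 he with ⟨rfl, rfl⟩ | ⟨rfl, rfl⟩
              · simp at hry
              · simp at hrx
          calc {e ∈ ((liGraph n t B a).deleteEdges
              (↑Fs : Set (Sym2 (LIVertex n t B a)))).edgeSet |
              ∀ v ∈ e, v ∈ (((liGraph n t B a).deleteEdges
                (↑Fs : Set (Sym2 (LIVertex n t B a)))).connectedComponentMk x0).supp}.ncard
              ≤ (↑(PvF n t B a j ∪ (Finset.univ.filter (fun i => f i = j)).biUnion
                (fun i => insert s(vu i, vv j) (PuF n t B a i))) :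
                  Set (Sym2 (LIVertex n t B a))).ncard :=
                Set.ncard_le_ncard hsub (Set.toFinite _)
            _ = (PvF n t B a j ∪ (Finset.univ.filter (fun i => f i = j)).biUnion
                (fun i => insert s(vu i, vv j) (PuF n t B a i))).card :=
                Set.ncard_coe_finset _
            _ = 2 * B + ∑ i ∈ Finset.univ.filter (fun i => f i = j), a i := card_Tj f ha j
            _ = 3 * B := by rw [hf j]; ring
        · -- component inside the region of w
          have hsub : {e ∈ ((liGraph n t B a).deleteEdges
              (↑Fs : Set (Sym2 (LIVertex n t B a)))).edgeSet |
              ∀ v ∈ e, v ∈ (((liGraph n t B a).deleteEdges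
                (↑Fs : Set (Sym2 (LIVertex n t B a)))).connectedComponentMk x0).supp}
              ⊆ ↑(PwF n t B a) := by
            intro e he
            induction e using Sym2.ind with
            | _ x y =>
            obtain ⟨heE, hsup⟩ := he
            rw [SimpleGraph.mem_edgeSet] at heE
            have hrx : piReg n t B a f x = Sum.inr u := by
              rw [← hreg]
              exact pi_const_on_supp hpi (hsup x (Sym2.mem_mk_left x y)) hx0
            have hry : piReg n t B a f y = Sum.inr u := by
              rw [← hreg]
              exact pi_const_on_supp hpi (hsup y (Sym2.mem_mk_right x y)) hx0
            have hG : (liGraph n t B a).Adj x y := (SimpleGraph.deleteEdges_adj.1 heE).1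
            rcases liAdj_cases hG with ⟨i, j', he⟩ | ⟨p, he⟩ | ⟨j', p, he⟩ | ⟨p, he⟩ | ⟨i, hi, he⟩
            · exfalso
              rcases Sym2.eq_iff.1 he with ⟨rfl, rfl⟩ | ⟨rfl, rfl⟩ <;> simp at hrx
            · exfalso
              rcases Sym2.eq_iff.1 he with ⟨rfl, rfl⟩ | ⟨rfl, rfl⟩ <;> simp at hrx
            · exfalso
              rcases Sym2.eq_iff.1 he with ⟨rfl, rfl⟩ | ⟨rfl, rfl⟩ <;> simp at hrx
            · rw [Finset.mem_coe, he]
              simp [PwF]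
            · exfalso
              rcases Sym2.eq_iff.1 he with ⟨rfl, rfl⟩ | ⟨rfl, rfl⟩
              · simp at hrx
              · simp at hry
          calc {e ∈ ((liGraph n t B a).deleteEdges
              (↑Fs : Set (Sym2 (LIVertex n t B a)))).edgeSet |
              ∀ v ∈ e, v ∈ (((liGraph n t B a).deleteEdges
                (↑Fs : Set (Sym2 (LIVertex n t B a)))).connectedComponentMk x0).supp}.ncard
              ≤ (↑(PwF n t B a) : Set (Sym2 (LIVertex n t B a))).ncard :=
                Set.ncard_le_ncard hsub (Set.toFinite _)
            _ = (PwF n t B a).card := Set.ncard_coe_finset _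
            _ = 3 * B := card_PwF
      -- cardinality of Fs
      have hfil : (Finset.univ.filter (fun p : Fin n × Fin t => f p.1 = p.2)).card = n := by
        have himg : Finset.univ.filter (fun p : Fin n × Fin t => f p.1 = p.2)
            = Finset.univ.image (fun i : Fin n => (i, f i)) := by
          ext p
          simp only [Finset.mem_filter, Finset.mem_univ, true_and, Finset.mem_image]
          constructor
          · intro h
            exact ⟨p.1, by rw [h]⟩
          · rintro ⟨i, rfl⟩
            rfl
        rw [himg, Finset.card_image_of_injective _ fun i i' h => (Prod.ext_iff.1 h).1]
        simp
      have hfil2 : (Finset.univ.filter (fun p : Fin n × Fin t => ¬ f p.1 = p.2)).card + n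
          = n * t := by
        have htot := Finset.card_filter_add_card_filter_not
          (s := (Finset.univ : Finset (Fin n × Fin t))) (p := fun p => f p.1 = p.2)
        rw [hfil] at htot
        rw [Finset.card_univ] at htot
        simp only [Fintype.card_prod, Fintype.card_fin] at htot
        omega
      have hFscard : Fs.card
          ≤ (Finset.univ.filter (fun p : Fin n × Fin t => ¬ f p.1 = p.2)).card + 1 := by
        rw [hFs]
        exact (Finset.card_insert_le _ _).trans
          (Nat.add_le_add_right (Finset.card_image_le) 1)
      have hFsc2 : Fs.card ≤ (t - 1) * n + 1 := by omega
      have hncard : (↑Fs : Set (Sym2 (LIVertex n t B a))).ncard = Fs.card :=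
        Set.ncard_coe_finset _
      rw [hncard]
      omega
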